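/- Subexponential growth of permutational wreath products: Let G be a group with finite symmetric generating set S of subexponential growth, acting transitively on the right on a set X with basepoint ξ, and let H be a group with finite symmetric generating set T of subexponential growth. Assume the inverted orbit growth of (G,S) on (X,ξ) is sublinear (Δ(R)/R → 0 as R → ∞) and the inverted orbit choice growth is subexponential (Σ(R)^{1/R} → 1 as R → ∞). Then the permutational wreath product W = H ≀_X G, with its finite symmetric generating set U = S ∪ {t@ξ : t ∈ T}, has subexponential growth: v_{W,U}(R)^{1/R} → 1 as R → ∞. -/

import Mathlib

set_option linter.unusedSectionVars false

/-- The underlying type of the unrestricted permutational wreath product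
`H ≀≀_X G = (X → H) ⋊ G`, where the group `G` acts on `X` on the right
(encoded as a `Gᵐᵒᵖ`-action). -/
@[ext] structure PermWreath (H G X : Type*) where
  fn : X → H
  pt : G

namespace PermWreath

variable {H G X : Type*} [Group H] [Group G] [MulAction Gᵐᵒᵖ X]

instance : One (PermWreath H G X) := ⟨⟨1, 1⟩⟩
instance : Mul (PermWreath H G X) :=
  ⟨fun a b => ⟨fun x => a.fn x * b.fn (MulOpposite.op a.pt • x), a.pt * b.pt⟩⟩
instance : Inv (PermWreath H G X) :=
  ⟨fun a => ⟨fun x => (a.fn (MulOpposite.op a.pt⁻¹ • x))⁻¹, a.pt⁻¹⟩⟩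

@[simp] lemma mul_fn (a b : PermWreath H G X) :
    (a * b).fn = fun x => a.fn x * b.fn (MulOpposite.op a.pt • x) := rfl
@[simp] lemma mul_pt (a b : PermWreath H G X) : (a * b).pt = a.pt * b.pt := rfl
@[simp] lemma one_fn : (1 : PermWreath H G X).fn = 1 := rfl
@[simp] lemma one_pt : (1 : PermWreath H G X).pt = 1 := rfl
@[simp] lemma inv_fn (a : PermWreath H G X) :
    (a⁻¹).fn = fun x => (a.fn (MulOpposite.op a.pt⁻¹ • x))⁻¹ := rfl
@[simp] lemma inv_pt (a : PermWreath H G X) : (a⁻¹).pt = a.pt⁻¹ := rfl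

/-- The unrestricted permutational wreath product is a group. -/
instance : Group (PermWreath H G X) :=
  Group.ofLeftAxioms
    (fun a b c => by
      ext x
      · simp only [mul_fn, mul_pt, MulOpposite.op_mul, mul_smul]
        rw [mul_assoc]
      · simp [mul_assoc])
    (fun a => by
      ext x
      · simp
      · simp)
    (fun a => by
      ext x
      · simp
      · simp)

/-- The restricted permutational wreath product `H ≀_X G`: the subgroup of the
unrestricted wreath product consisting of elements whose function component is
finitely supported. -/
def restricted (H G X : Type*) [Group H] [Group G] [MulAction Gᵐᵒᵖ X] :
    Subgroup (PermWreath H G X) where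
  carrier := {w | (Function.mulSupport w.fn).Finite}
  one_mem' := by
    simp [Set.mem_setOf_eq, one_fn]
  mul_mem' := by
    intro a b ha hb
    refine Set.Finite.subset
      (Set.Finite.union ha (Set.Finite.preimage
        (Set.injOn_of_injective (MulAction.injective (MulOpposite.op a.pt))) hb)) ?_
    intro x hx
    by_contra hmem
    simp only [Set.mem_union, Set.mem_preimage, Function.mem_mulSupport, not_or,
      not_not] at hmem
    exact hx (by simp [mul_fn, hmem.1, hmem.2] : (a * b).fn x = 1)
  inv_mem' := by
    intro a ha
    refine Set.Finite.subset
      (Set.Finite.preimage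
        (Set.injOn_of_injective (MulAction.injective (MulOpposite.op a.pt⁻¹))) ha) ?_
    intro x hx
    by_contra hmem
    simp only [Set.mem_preimage, Function.mem_mulSupport, not_not] at hmem
    exact hx (by simp only [inv_fn]; rw [hmem]; simp)

end PermWreath

/-- The function `X → H` with value `t` at `ξ` and `1` elsewhere (the decoration `t@ξ`). -/
noncomputable def atPoint {H : Type*} {X : Type*} [One H] (ξ : X) (t : H) : X → H :=
  fun x => by classical exact if x = ξ then t else 1

/-- The word norm of `g` with respect to a generating set `S`. -/
noncomputable def wordNorm {G : Type*} [Group G] (S : Set G) (g : G) : ℕ :=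
  sInf {n | ∃ l : List G, (∀ s ∈ l, s ∈ S) ∧ l.length = n ∧ l.prod = g}

/-- The growth function `v_{G,S}(R) = #{g : ‖g‖_S ≤ R}`. -/
noncomputable def growthFn {G : Type*} [Group G] (S : Set G) (R : ℕ) : ℕ :=
  Nat.card {g : G // wordNorm S g ≤ R}

/-- The inverted orbit `O(w) = {ξ·w_{i+1}⋯w_ℓ : 0 ≤ i ≤ ℓ}` of a word
`w = (w₁, …, w_ℓ)` over `G`, for the right action of `G` on `X` with basepoint `ξ`. -/
def invertedOrbit {G X : Type*} [Group G] [MulAction Gᵐᵒᵖ X] (ξ : X) (w : List G) :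
    Set X :=
  {x | ∃ i ≤ w.length, x = MulOpposite.op (w.drop i).prod • ξ}

/-- The inverted orbit growth `Δ(R)`: the largest cardinality of the inverted orbit of
a word over `S` of length at most `R`. -/
noncomputable def invOrbitGrowth {G X : Type*} [Group G] [MulAction Gᵐᵒᵖ X]
    (S : Set G) (ξ : X) (R : ℕ) : ℕ :=
  sSup {n | ∃ w : List G, (∀ s ∈ w, s ∈ S) ∧ w.length ≤ R ∧
    n = Nat.card ↥(invertedOrbit ξ w)}

/-- The inverted orbit choice growth `Σ(R)`: the number of distinct subsets of `X`
arising as inverted orbits of words over `S` of length at most `R`. -/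
noncomputable def invOrbitChoices {G X : Type*} [Group G] [MulAction Gᵐᵒᵖ X]
    (S : Set G) (ξ : X) (R : ℕ) : ℕ :=
  Nat.card {O : Set X // ∃ w : List G, (∀ s ∈ w, s ∈ S) ∧ w.length ≤ R ∧
    O = invertedOrbit ξ w}

namespace WreathAux

open Function

section WordNorm

variable {G : Type*} [Group G]

lemma wordNorm_le_of_word {S : Set G} {g : G} {l : List G} {n : ℕ} (hl : ∀ s ∈ l, s ∈ S)
    (hlen : l.length ≤ n) (hprod : l.prod = g) : wordNorm S g ≤ n :=
  le_trans (Nat.sInf_le ⟨l, hl, rfl, hprod⟩) hlen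

lemma wordNorm_one (S : Set G) : wordNorm S 1 = 0 :=
  Nat.le_zero.mp (wordNorm_le_of_word (l := []) (by simp) (by simp) (by simp))

lemma exists_word_of_gen {S : Set G} (hsym : S⁻¹ = S) (hgen : Subgroup.closure S = ⊤)
    (g : G) :
    ∃ l : List G, (∀ s ∈ l, s ∈ S) ∧ l.length = wordNorm S g ∧ l.prod = g := by
  have hg : g ∈ Submonoid.closure S := by
    have h1 : g ∈ (Subgroup.closure S).toSubmonoid := by rw [hgen]; trivial
    rwa [Subgroup.closure_toSubmonoid, hsym, Set.union_self] at h1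
  obtain ⟨l, hl, hp⟩ := Submonoid.exists_list_of_mem_closure hg
  have hne : {n | ∃ l : List G, (∀ s ∈ l, s ∈ S) ∧ l.length = n ∧ l.prod = g}.Nonempty :=
    ⟨l.length, l, hl, rfl, hp⟩
  obtain ⟨l', h1, h2, h3⟩ := Nat.sInf_mem hne
  exact ⟨l', h1, h2, h3⟩

lemma wordNorm_mul_le {S : Set G} (hsym : S⁻¹ = S) (hgen : Subgroup.closure S = ⊤)
    {t : G} (ht : t ∈ S) (h : G) :
    wordNorm S (t * h) ≤ wordNorm S h + 1 := by
  obtain ⟨l, h1, h2, h3⟩ := exists_word_of_gen hsym hgen h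
  refine wordNorm_le_of_word (l := t :: l) ?_ ?_ ?_
  · intro s hs
    rcases List.mem_cons.mp hs with rfl | hs
    · exact ht
    · exact h1 s hs
  · simp [h2]
  · simp [h3]

lemma finite_lists (S : Set G) (hS : S.Finite) (R : ℕ) :
    {l : List G | (∀ s ∈ l, s ∈ S) ∧ l.length ≤ R}.Finite := by
  induction R with
  | zero =>
    refine Set.Finite.subset (Set.finite_singleton []) ?_
    rintro l ⟨-, hlen⟩
    simpa using List.eq_nil_of_length_eq_zero (Nat.le_zero.mp hlen)
  | succ n ih =>
    refine Set.Finite.subset ((Set.finite_singleton ([] : List G)).union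
      (Set.Finite.image2 List.cons hS ih)) ?_
    rintro l ⟨hmem, hlen⟩
    cases l with
    | nil => exact Or.inl rfl
    | cons a t =>
      refine Or.inr (Set.mem_image2_of_mem (hmem a (by simp)) ?_)
      exact ⟨fun s hs => hmem s (List.mem_cons_of_mem _ hs), by simpa using hlen⟩

lemma ball_finite {S : Set G} (hS : S.Finite) (hsym : S⁻¹ = S)
    (hgen : Subgroup.closure S = ⊤) (R : ℕ) :
    {g : G | wordNorm S g ≤ R}.Finite := by
  refine Set.Finite.subset ((finite_lists S hS R).image List.prod) ?_
  intro g hg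
  obtain ⟨l, h1, h2, h3⟩ := exists_word_of_gen hsym hgen g
  exact ⟨l, ⟨h1, by rw [h2]; exact hg⟩, h3⟩

lemma one_le_growthFn {S : Set G} (hS : S.Finite) (hsym : S⁻¹ = S)
    (hgen : Subgroup.closure S = ⊤) (R : ℕ) : 1 ≤ growthFn S R := by
  have hfin : Finite {g : G // wordNorm S g ≤ R} := (ball_finite hS hsym hgen R).to_subtype
  have hne : Nonempty {g : G // wordNorm S g ≤ R} :=
    ⟨⟨1, by rw [wordNorm_one]; exact Nat.zero_le R⟩⟩
  exact Nat.one_le_iff_ne_zero.mpr (Nat.card_ne_zero.mpr ⟨hne, hfin⟩)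

end WordNorm

end WreathAux
namespace WreathAux

open Function MulOpposite

section Orbit

variable {G X : Type*} [Group G] [MulAction Gᵐᵒᵖ X]

lemma invertedOrbit_nil (ξ : X) : invertedOrbit (G := G) ξ [] = {ξ} := by
  ext x
  constructor
  · rintro ⟨i, hi, rfl⟩
    obtain rfl : i = 0 := Nat.le_zero.mp hi
    simp
  · rintro rfl
    exact ⟨0, by simp, by simp⟩

lemma invertedOrbit_cons (ξ : X) (a : G) (w : List G) :
    invertedOrbit ξ (a :: w) = insert (op (a * w.prod) • ξ) (invertedOrbit ξ w) := by
  ext x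
  constructor
  · rintro ⟨i, hi, rfl⟩
    cases i with
    | zero => exact Or.inl (by simp)
    | succ j =>
      exact Or.inr ⟨j, by simpa using hi, by simp⟩
  · rintro (rfl | ⟨j, hj, rfl⟩)
    · exact ⟨0, by simp, by simp⟩
    · exact ⟨j + 1, by simpa using hj, by simp⟩

lemma invertedOrbit_append_singleton (ξ : X) (w : List G) (s : G) :
    invertedOrbit ξ (w ++ [s]) = insert ξ ((fun x => op s • x) '' invertedOrbit ξ w) := by
  ext x
  constructor
  · rintro ⟨i, hi, rfl⟩
    rcases Nat.lt_or_ge i (w.length + 1) with h | h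
    · refine Or.inr ⟨op (w.drop i).prod • ξ, ⟨i, Nat.lt_succ_iff.mp h, rfl⟩, ?_⟩
      rw [List.drop_append_of_le_length (Nat.lt_succ_iff.mp h)]
      rw [List.prod_append, List.prod_singleton, op_mul, mul_smul]
    · have hlen : (w ++ [s]).length = w.length + 1 := by simp
      have : i = w.length + 1 := le_antisymm (by rw [← hlen]; exact hi) h
      subst this
      left
      rw [List.drop_eq_nil_of_le (by simp)]
      simp
  · rintro (rfl | ⟨y, ⟨i, hi, rfl⟩, rfl⟩)
    · exact ⟨w.length + 1, by simp, by rw [List.drop_eq_nil_of_le (by simp)]; simp⟩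
    · refine ⟨i, by simp; omega, ?_⟩
      rw [List.drop_append_of_le_length hi]
      rw [List.prod_append, List.prod_singleton, op_mul, mul_smul]

lemma invertedOrbit_finite (ξ : X) (w : List G) : (invertedOrbit ξ w).Finite := by
  induction w with
  | nil => rw [invertedOrbit_nil]; exact Set.finite_singleton _
  | cons a t ih => rw [invertedOrbit_cons]; exact ih.insert _

lemma ncard_invertedOrbit_le (ξ : X) (w : List G) :
    (invertedOrbit ξ w).ncard ≤ w.length + 1 := by
  induction w with
  | nil => rw [invertedOrbit_nil]; simp
  | cons a t ih =>
    rw [invertedOrbit_cons]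
    calc (insert (op (a * t.prod) • ξ) (invertedOrbit ξ t)).ncard
        ≤ (invertedOrbit ξ t).ncard + 1 :=
          Set.ncard_insert_le _ _
      _ ≤ (t.length + 1) + 1 := by omega
      _ = (a :: t).length + 1 := by simp

lemma prod_filter_ne_one [DecidableEq G] (l : List G) :
    (l.filter (fun s => s ≠ 1)).prod = l.prod := by
  induction l with
  | nil => rfl
  | cons a t ih =>
    by_cases ha : a = 1
    · subst ha
      rw [List.filter_cons_of_neg (by simp), ih, List.prod_cons, one_mul]
    · rw [List.filter_cons_of_pos (by simpa using ha), List.prod_cons, List.prod_cons, ih]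

lemma invertedOrbit_filter [DecidableEq G] (ξ : X) (w : List G) :
    invertedOrbit ξ (w.filter (fun s => s ≠ 1)) = invertedOrbit ξ w := by
  induction w with
  | nil => rfl
  | cons a t ih =>
    by_cases ha : a = 1
    · subst ha
      rw [List.filter_cons_of_neg (by simp), ih, invertedOrbit_cons]
      simp only [one_mul]
      refine (Set.insert_eq_self.mpr ?_).symm
      exact ⟨0, by simp, by simp⟩
    · rw [List.filter_cons_of_pos (by simpa using ha), invertedOrbit_cons, invertedOrbit_cons,
        ih, prod_filter_ne_one]

end Orbit

end WreathAux
namespace WreathAux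

open Function MulOpposite

section Core

variable {H G X : Type*} [Group H] [Group G] [MulAction Gᵐᵒᵖ X]

lemma core_decomp (S : Set G) (T : Set H) (ξ : X)
    (hTsym : T⁻¹ = T) (hTgen : Subgroup.closure T = ⊤) :
    ∀ l : List (PermWreath H G X),
      (∀ a ∈ l, (∃ s ∈ S, a = ⟨1, s⟩) ∨ (∃ t ∈ T, a = ⟨atPoint ξ t, 1⟩)) →
      ∃ (ls : List G) (B : Finset X),
        (∀ s ∈ ls, s ∈ S) ∧ ls.length ≤ l.length ∧ ls.prod = l.prod.pt ∧
        Function.mulSupport l.prod.fn ⊆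
          invertedOrbit ξ ((l.map (fun a => a.pt⁻¹)).reverse) ∧
        Function.mulSupport l.prod.fn ⊆ ↑B ∧
        ∑ x ∈ B, wordNorm T (l.prod.fn x) ≤ l.length := by
  classical
  intro l
  induction l with
  | nil =>
    intro _
    refine ⟨[], ∅, by simp, by simp, by simp, ?_, ?_, by simp [wordNorm_one]⟩
    · simp [PermWreath.one_fn]
    · simp [PermWreath.one_fn]
  | cons a t ih =>
    intro hmem
    obtain ⟨ls, B, h1, h2, h3, h4, h5, h6⟩ := ih (fun a' ha' => hmem a' (List.mem_cons_of_mem _ ha'))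
    have hprod : (a :: t).prod = a * t.prod := List.prod_cons
    rcases hmem a List.mem_cons_self with ⟨s, hs, rfl⟩ | ⟨t₀, ht₀, rfl⟩
    · -- S-letter ⟨1, s⟩
      set v := t.prod with hv
      have hfn : ((⟨1, s⟩ : PermWreath H G X) * v).fn = fun x => v.fn (op s • x) := by
        funext x
        simp [PermWreath.mul_fn]
      have hpt : ((⟨1, s⟩ : PermWreath H G X) * v).pt = s * v.pt := rfl
      have horb : (((⟨1, s⟩ : PermWreath H G X) :: t).map (fun a => a.pt⁻¹)).reverse
          = (t.map (fun a => a.pt⁻¹)).reverse ++ [s⁻¹] := by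
        rw [List.map_cons, List.reverse_cons]
      rw [hprod]
      refine ⟨s :: ls, B.map ⟨fun y => (op s)⁻¹ • y, MulAction.injective _⟩,
        ?_, ?_, ?_, ?_, ?_, ?_⟩
      · intro s' hs'
        rcases List.mem_cons.mp hs' with rfl | hs'
        · exact hs
        · exact h1 s' hs'
      · simpa using Nat.succ_le_succ h2
      · rw [List.prod_cons, hpt, h3]
      · intro x hx
        have hx' : v.fn (op s • x) ≠ 1 := by
          rw [hfn] at hx
          exact hx
        rw [horb, invertedOrbit_append_singleton]
        refine Or.inr ⟨op s • x, h4 hx', ?_⟩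
        show op s⁻¹ • op s • x = x
        rw [op_inv, inv_smul_smul]
      · intro x hx
        have hx' : v.fn (op s • x) ≠ 1 := by
          rw [hfn] at hx
          exact hx
        simp only [Finset.coe_map, Set.mem_image, Finset.mem_coe,
          Function.Embedding.coeFn_mk]
        exact ⟨op s • x, h5 hx', inv_smul_smul _ _⟩
      · rw [Finset.sum_map]
        have : ∀ y ∈ B, wordNorm T (((⟨1, s⟩ : PermWreath H G X) * v).fn
            ((⟨fun y => (op s)⁻¹ • y, MulAction.injective _⟩ : X ↪ X) y))
            = wordNorm T (v.fn y) := by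
          intro y _
          rw [hfn]
          simp only [Function.Embedding.coeFn_mk]
          rw [smul_inv_smul]
        rw [Finset.sum_congr rfl this]
        calc ∑ y ∈ B, wordNorm T (v.fn y) ≤ t.length := h6
          _ ≤ (((⟨1, s⟩ : PermWreath H G X)) :: t).length := by simp
    · -- T-letter ⟨atPoint ξ t₀, 1⟩
      set v := t.prod with hv
      set a : PermWreath H G X := ⟨atPoint ξ t₀, 1⟩ with ha
      have hfn : (a * v).fn = fun x => atPoint ξ t₀ x * v.fn x := by
        funext x
        show atPoint ξ t₀ x * v.fn (op (1 : G) • x) = _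
        rw [op_one, one_smul]
      have hpt : (a * v).pt = v.pt := one_mul _
      have horb : ((a :: t).map (fun a => a.pt⁻¹)).reverse
          = (t.map (fun a => a.pt⁻¹)).reverse ++ [(1 : G)⁻¹] := by
        rw [List.map_cons, List.reverse_cons]
      have hfnne : ∀ x, x ≠ ξ → (a * v).fn x = v.fn x := by
        intro x hx
        rw [hfn]
        simp only []
        rw [atPoint, if_neg hx, one_mul]
      rw [hprod]
      refine ⟨ls, insert ξ B, h1, le_trans h2 (by simp), by rw [hpt, h3], ?_, ?_, ?_⟩
      · intro x hx
        rw [horb, invertedOrbit_append_singleton]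
        by_cases hxξ : x = ξ
        · exact Or.inl hxξ
        · have hx2 : (a * v).fn x ≠ 1 := Function.mem_mulSupport.mp hx
          rw [hfnne x hxξ] at hx2
          exact Or.inr ⟨x, h4 hx2, by simp⟩
      · intro x hx
        by_cases hxξ : x = ξ
        · simp [hxξ]
        · have hx2 : (a * v).fn x ≠ 1 := Function.mem_mulSupport.mp hx
          rw [hfnne x hxξ] at hx2
          simp only [Finset.coe_insert, Set.mem_insert_iff]
          exact Or.inr (h5 hx2)
      · have hξB' : ξ ∈ insert ξ B := Finset.mem_insert_self _ _
        have hB'le : ∑ x ∈ insert ξ B, wordNorm T (v.fn x) ≤ t.length := by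
          by_cases hξB : ξ ∈ B
          · rw [Finset.insert_eq_self.mpr hξB]
            exact h6
          · rw [Finset.sum_insert hξB]
            have hv1 : v.fn ξ = 1 := by
              by_contra hne
              exact hξB (h5 hne)
            rw [hv1, wordNorm_one, zero_add]
            exact h6
        calc ∑ x ∈ insert ξ B, wordNorm T ((a * v).fn x)
            = wordNorm T ((a * v).fn ξ) +
              ∑ x ∈ (insert ξ B).erase ξ, wordNorm T ((a * v).fn x) :=
              (Finset.add_sum_erase _ _ hξB').symm
          _ ≤ (wordNorm T (v.fn ξ) + 1) +
              ∑ x ∈ (insert ξ B).erase ξ, wordNorm T (v.fn x) := by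
              have e1 : (a * v).fn ξ = t₀ * v.fn ξ := by
                rw [hfn]
                simp only []
                rw [atPoint, if_pos rfl]
              have e2 : ∑ x ∈ (insert ξ B).erase ξ, wordNorm T ((a * v).fn x)
                  = ∑ x ∈ (insert ξ B).erase ξ, wordNorm T (v.fn x) := by
                refine Finset.sum_congr rfl fun x hx => ?_
                rw [hfnne x (Finset.ne_of_mem_erase hx)]
              rw [e1, e2]
              exact Nat.add_le_add_right (wordNorm_mul_le hTsym hTgen ht₀ _) _
          _ = (wordNorm T (v.fn ξ) +
              ∑ x ∈ (insert ξ B).erase ξ, wordNorm T (v.fn x)) + 1 := by omega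
          _ = (∑ x ∈ insert ξ B, wordNorm T (v.fn x)) + 1 :=
              congrArg (· + 1) (Finset.add_sum_erase (insert ξ B) (fun x => wordNorm T (v.fn x)) hξB')
          _ ≤ t.length + 1 := Nat.add_le_add_right hB'le _
          _ = (a :: t).length := by simp

end Core

end WreathAux
namespace WreathAux

open Function MulOpposite

section Gen

variable {H G X : Type*} [Group H] [Group G] [MulAction Gᵐᵒᵖ X]

/-- The generating set of the wreath product, as a set in the restricted subgroup. -/
def Uset (S : Set G) (T : Set H) (ξ : X) : Set ↥(PermWreath.restricted H G X) :=
  {w | (w : PermWreath H G X) ∈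
    ((fun s : G => PermWreath.mk (1 : X → H) s) '' S) ∪
    ((fun t : H => PermWreath.mk (atPoint ξ t) (1 : G)) '' T)}

lemma atPoint_apply_self (ξ : X) (t : H) : atPoint ξ t ξ = t := by
  rw [atPoint]
  exact if_pos rfl

lemma atPoint_apply_ne (ξ : X) (t : H) {x : X} (hx : x ≠ ξ) : atPoint ξ t x = 1 := by
  rw [atPoint]
  exact if_neg hx

lemma atPoint_one (ξ : X) : atPoint ξ (1 : H) = 1 := by
  funext x
  by_cases hx : x = ξ
  · subst hx
    rw [atPoint_apply_self]
    rfl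
  · rw [atPoint_apply_ne _ _ hx]
    rfl

lemma atPoint_mul_apply (ξ : X) (s t : H) (x : X) :
    atPoint ξ s x * atPoint ξ t x = atPoint ξ (s * t) x := by
  by_cases hx : x = ξ
  · subst hx
    rw [atPoint_apply_self, atPoint_apply_self, atPoint_apply_self]
  · rw [atPoint_apply_ne _ _ hx, atPoint_apply_ne _ _ hx, atPoint_apply_ne _ _ hx, one_mul]

lemma atPoint_inv_apply (ξ : X) (t : H) (x : X) :
    (atPoint ξ t x)⁻¹ = atPoint ξ t⁻¹ x := by
  by_cases hx : x = ξ
  · subst hx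
    rw [atPoint_apply_self, atPoint_apply_self]
  · rw [atPoint_apply_ne _ _ hx, atPoint_apply_ne _ _ hx, inv_one]

lemma mulSupport_atPoint_subset (ξ : X) (t : H) :
    mulSupport (atPoint ξ t) ⊆ {ξ} := by
  intro x hx
  by_contra hne
  exact hx (atPoint_apply_ne _ _ (by simpa using hne))

lemma mulSupport_atPoint_finite (ξ : X) (t : H) :
    (mulSupport (atPoint ξ t)).Finite :=
  (Set.finite_singleton ξ).subset (mulSupport_atPoint_subset ξ t)

lemma mulSupport_one_finite : (mulSupport (1 : X → H)).Finite :=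
  Set.finite_empty.subset (fun _ hx => absurd rfl hx)

lemma Uset_finite {S : Set G} {T : Set H} (ξ : X) (hS : S.Finite) (hT : T.Finite) :
    (Uset S T ξ).Finite := by
  have h : (((fun s : G => PermWreath.mk (1 : X → H) s) '' S) ∪
      ((fun t : H => PermWreath.mk (atPoint ξ t) (1 : G)) '' T)).Finite :=
    (hS.image _).union (hT.image _)
  exact h.preimage (Set.injOn_of_injective Subtype.val_injective)

lemma Uset_symm {S : Set G} {T : Set H} (ξ : X) (hSsym : S⁻¹ = S) (hTsym : T⁻¹ = T) :
    (Uset S T ξ)⁻¹ = Uset S T ξ := by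
  have step : ∀ w, w ∈ Uset S T ξ → w⁻¹ ∈ Uset S T ξ := by
    rintro w (⟨s, hs, hw⟩ | ⟨t, ht, hw⟩)
    · refine Or.inl ⟨s⁻¹, by rw [← hSsym]; exact Set.inv_mem_inv.mpr hs, ?_⟩
      show PermWreath.mk (1 : X → H) s⁻¹ = ((w⁻¹ : ↥(PermWreath.restricted H G X)) : PermWreath H G X)
      have : ((w⁻¹ : ↥(PermWreath.restricted H G X)) : PermWreath H G X)
          = ((w : PermWreath H G X))⁻¹ := rfl
      rw [this, ← hw]
      ext x
      · show (1 : H) = ((1 : X → H) _)⁻¹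
        simp
      · rfl
    · refine Or.inr ⟨t⁻¹, by rw [← hTsym]; exact Set.inv_mem_inv.mpr ht, ?_⟩
      show PermWreath.mk (atPoint ξ t⁻¹) (1 : G) = _
      have : ((w⁻¹ : ↥(PermWreath.restricted H G X)) : PermWreath H G X)
          = ((w : PermWreath H G X))⁻¹ := rfl
      rw [this, ← hw]
      ext x
      · show atPoint ξ t⁻¹ x = (atPoint ξ t (op (1 : G)⁻¹ • x))⁻¹
        rw [inv_one, op_one, one_smul, atPoint_inv_apply]
      · show (1 : G) = (1 : G)⁻¹
        rw [inv_one]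
  ext w
  rw [Set.mem_inv]
  constructor
  · intro h
    have := step _ h
    rwa [inv_inv] at this
  · exact fun h => step w h

lemma closure_Uset (S : Set G) (T : Set H) (ξ : X)
    (hSgen : Subgroup.closure S = ⊤) (hTgen : Subgroup.closure T = ⊤)
    (htrans : ∀ x y : X, ∃ g : G, op g • x = y) :
    Subgroup.closure (Uset S T ξ) = ⊤ := by
  classical
  have hone : ((PermWreath.mk (1 : X → H) · : G → PermWreath H G X)) = fun g => ⟨1, g⟩ := rfl
  -- step A : the copies of G
  have stepA : ∀ g : G,
      (⟨⟨1, g⟩, mulSupport_one_finite⟩ : ↥(PermWreath.restricted H G X)) ∈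
        Subgroup.closure (Uset S T ξ) := by
    intro g
    have hg : g ∈ Subgroup.closure S := by rw [hSgen]; trivial
    induction hg using Subgroup.closure_induction with
    | mem s hs => exact Subgroup.subset_closure (Or.inl ⟨s, hs, rfl⟩)
    | one => exact Subgroup.one_mem _
    | mul x y hx hy ihx ihy =>
      have heq : (⟨⟨1, x * y⟩, mulSupport_one_finite⟩ : ↥(PermWreath.restricted H G X))
          = ⟨⟨1, x⟩, mulSupport_one_finite⟩ * ⟨⟨1, y⟩, mulSupport_one_finite⟩ := by
        refine Subtype.ext ?_
        ext z
        · show (1 : H) = (1 : X → H) z * (1 : X → H) (op x • z)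
          simp
        · rfl
      rw [heq]
      exact Subgroup.mul_mem _ ihx ihy
    | inv x hx ihx =>
      have heq : (⟨⟨1, x⁻¹⟩, mulSupport_one_finite⟩ : ↥(PermWreath.restricted H G X))
          = (⟨⟨1, x⟩, mulSupport_one_finite⟩ : ↥(PermWreath.restricted H G X))⁻¹ := by
        refine Subtype.ext ?_
        ext z
        · show (1 : H) = ((1 : X → H) _)⁻¹
          simp
        · rfl
      rw [heq]
      exact Subgroup.inv_mem _ ihx
  -- step B1 : decorations at the base point
  have stepB1 : ∀ h : H,
      (⟨⟨atPoint ξ h, 1⟩, mulSupport_atPoint_finite ξ h⟩ :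
        ↥(PermWreath.restricted H G X)) ∈ Subgroup.closure (Uset S T ξ) := by
    intro h
    have hh : h ∈ Subgroup.closure T := by rw [hTgen]; trivial
    induction hh using Subgroup.closure_induction with
    | mem t ht => exact Subgroup.subset_closure (Or.inr ⟨t, ht, rfl⟩)
    | one =>
      have heq : (⟨⟨atPoint ξ (1 : H), 1⟩, mulSupport_atPoint_finite ξ 1⟩ :
          ↥(PermWreath.restricted H G X)) = 1 := by
        refine Subtype.ext ?_
        ext z
        · show atPoint ξ (1 : H) z = (1 : X → H) z
          rw [atPoint_one]
        · rfl
      rw [heq]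
      exact Subgroup.one_mem _
    | mul x y hx hy ihx ihy =>
      have heq : (⟨⟨atPoint ξ (x * y), 1⟩, mulSupport_atPoint_finite ξ _⟩ :
            ↥(PermWreath.restricted H G X))
          = ⟨⟨atPoint ξ x, 1⟩, mulSupport_atPoint_finite ξ _⟩ *
            ⟨⟨atPoint ξ y, 1⟩, mulSupport_atPoint_finite ξ _⟩ := by
        refine Subtype.ext ?_
        ext z
        · show atPoint ξ (x * y) z = atPoint ξ x z * atPoint ξ y (op (1 : G) • z)
          rw [op_one, one_smul, atPoint_mul_apply]
        · show (1 : G) = 1 * 1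
          rw [one_mul]
      rw [heq]
      exact Subgroup.mul_mem _ ihx ihy
    | inv x hx ihx =>
      have heq : (⟨⟨atPoint ξ x⁻¹, 1⟩, mulSupport_atPoint_finite ξ _⟩ :
            ↥(PermWreath.restricted H G X))
          = (⟨⟨atPoint ξ x, 1⟩, mulSupport_atPoint_finite ξ _⟩ :
            ↥(PermWreath.restricted H G X))⁻¹ := by
        refine Subtype.ext ?_
        ext z
        · show atPoint ξ x⁻¹ z = (atPoint ξ x (op (1 : G)⁻¹ • z))⁻¹
          rw [inv_one, op_one, one_smul, atPoint_inv_apply]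
        · show (1 : G) = (1 : G)⁻¹
          rw [inv_one]
      rw [heq]
      exact Subgroup.inv_mem _ ihx
  -- step B2 : decorations at arbitrary points
  have stepB2 : ∀ (x : X) (h : H),
      (⟨⟨atPoint x h, 1⟩, mulSupport_atPoint_finite x h⟩ :
        ↥(PermWreath.restricted H G X)) ∈ Subgroup.closure (Uset S T ξ) := by
    intro x h
    obtain ⟨g, hg⟩ := htrans x ξ
    have hx : x = op g⁻¹ • ξ := by rw [← hg, op_inv, inv_smul_smul]
    have heq : (⟨⟨atPoint x h, 1⟩, mulSupport_atPoint_finite x h⟩ :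
          ↥(PermWreath.restricted H G X))
        = ⟨⟨1, g⟩, mulSupport_one_finite⟩ *
          ⟨⟨atPoint ξ h, 1⟩, mulSupport_atPoint_finite ξ h⟩ *
          (⟨⟨1, g⟩, mulSupport_one_finite⟩ : ↥(PermWreath.restricted H G X))⁻¹ := by
      refine Subtype.ext ?_
      ext z
      · show atPoint x h z =
          ((1 : X → H) z * atPoint ξ h (op g • z)) *
            ((1 : X → H) _)⁻¹
        rw [Pi.one_apply, one_mul, Pi.one_apply, inv_one, mul_one]
        by_cases hz : z = x
        · subst hz
          rw [atPoint_apply_self, hx, op_inv, smul_inv_smul, atPoint_apply_self]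
        · rw [atPoint_apply_ne _ _ hz, atPoint_apply_ne]
          intro hc
          exact hz (by rw [hx, ← hc, op_inv, inv_smul_smul])
      · show (1 : G) = g * 1 * g⁻¹
        rw [mul_one, mul_inv_cancel]
    rw [heq]
    exact Subgroup.mul_mem _ (Subgroup.mul_mem _ (stepA g) (stepB1 h))
      (Subgroup.inv_mem _ (stepA g))
  -- step B3 : arbitrary finitely supported functions
  have stepB3 : ∀ (B : Finset X) (f : X → H) (hsupp : mulSupport f ⊆ ↑B)
      (hf : (mulSupport f).Finite),
      (⟨⟨f, 1⟩, hf⟩ : ↥(PermWreath.restricted H G X)) ∈ Subgroup.closure (Uset S T ξ) := by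
    intro B
    induction B using Finset.induction_on with
    | empty =>
      intro f hsupp hf
      have hf1 : f = 1 := by
        funext z
        by_contra hz
        simpa using hsupp hz
      subst hf1
      have heq : (⟨⟨1, 1⟩, hf⟩ : ↥(PermWreath.restricted H G X)) = 1 := rfl
      rw [heq]
      exact Subgroup.one_mem _
    | @insert x B hxB ih =>
      intro f hsupp hf
      have hsupp' : mulSupport (Function.update f x 1) ⊆ ↑B := by
        intro z hz
        have hzx : z ≠ x := by
          intro hzx
          subst hzx
          exact hz (Function.update_self _ _ _)
        have : f z ≠ 1 := by
          have hz' := Function.mem_mulSupport.mp hz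
          rwa [Function.update_of_ne hzx] at hz'
        rcases Finset.mem_insert.mp (hsupp this) with h | h
        · exact absurd h hzx
        · exact h
      have hfin' : (mulSupport (Function.update f x 1)).Finite :=
        B.finite_toSet.subset hsupp'
      have heq : (⟨⟨f, 1⟩, hf⟩ : ↥(PermWreath.restricted H G X))
          = ⟨⟨atPoint x (f x), 1⟩, mulSupport_atPoint_finite x (f x)⟩ *
            ⟨⟨Function.update f x 1, 1⟩, hfin'⟩ := by
        refine Subtype.ext ?_
        ext z
        · show f z = atPoint x (f x) z *
            Function.update f x 1 (op (1 : G) • z)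
          rw [op_one, one_smul]
          by_cases hz : z = x
          · subst hz
            rw [atPoint_apply_self, Function.update_self, mul_one]
          · rw [atPoint_apply_ne _ _ hz, Function.update_of_ne hz, one_mul]
        · show (1 : G) = 1 * 1
          rw [one_mul]
      rw [heq]
      exact Subgroup.mul_mem _ (stepB2 x (f x)) (ih _ hsupp' hfin')
  -- assemble
  rw [eq_top_iff]
  rintro w -
  obtain ⟨⟨f, p⟩, hw⟩ := w
  have hwfin : (mulSupport f).Finite := hw
  have heq : (⟨⟨f, p⟩, hw⟩ : ↥(PermWreath.restricted H G X))
      = ⟨⟨f, 1⟩, hwfin⟩ * ⟨⟨1, p⟩, mulSupport_one_finite⟩ := by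
    refine Subtype.ext ?_
    ext z
    · show f z = f z * (1 : X → H) (op (1:G) • z)
      rw [Pi.one_apply, mul_one]
    · show p = 1 * p
      rw [one_mul]
  rw [heq]
  exact Subgroup.mul_mem _ (stepB3 hwfin.toFinset f (by simp) hwfin) (stepA p)

end Gen

end WreathAux
namespace WreathAux

open Function MulOpposite

section Count

variable {H X : Type*} [Group H]

lemma F_finite (T : Set H) (hTfin : T.Finite) (hTsym : T⁻¹ = T)
    (hTgen : Subgroup.closure T = ⊤) (O : Finset X) (R : ℕ) :
    Finite {f : X → H // mulSupport f ⊆ ↑O ∧ ∑ x ∈ O, wordNorm T (f x) ≤ R} := by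
  have hball : Finite {h : H // wordNorm T h ≤ R} :=
    (ball_finite hTfin hTsym hTgen R).to_subtype
  refine Finite.of_injective (fun f (x : ↥O) =>
    (⟨f.1 x, le_trans (Finset.single_le_sum (f := fun y => wordNorm T (f.1 y))
      (fun i _ => Nat.zero_le _) x.2) f.2.2⟩ : {h : H // wordNorm T h ≤ R})) ?_
  intro f g hfg
  refine Subtype.ext (funext fun z => ?_)
  by_cases hz : z ∈ O
  · exact congrArg Subtype.val (congrFun hfg ⟨z, hz⟩)
  · have h1 : f.1 z = 1 := Function.notMem_mulSupport.mp (fun hm => hz (f.2.1 hm))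
    have h2 : g.1 z = 1 := Function.notMem_mulSupport.mp (fun hm => hz (g.2.1 hm))
    rw [h1, h2]

lemma sum_geom_le {q : ℝ} (h0 : 0 ≤ q) (h1 : q < 1) (n : ℕ) :
    ∑ r ∈ Finset.range n, q ^ r ≤ (1 - q)⁻¹ := by
  have h1q : 0 < 1 - q := sub_pos.mpr h1
  rw [geom_sum_eq (ne_of_lt h1)]
  have heq : (q ^ n - 1) / (q - 1) = (1 - q ^ n) / (1 - q) := by
    rw [← neg_sub 1 (q ^ n), ← neg_sub 1 q, neg_div_neg_eq]
  rw [heq, ← one_div]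
  exact div_le_div₀ zero_le_one (sub_le_self 1 (pow_nonneg h0 n)) h1q le_rfl

lemma inner_sum_le (T : Set H) (hTfin : T.Finite) (hTsym : T⁻¹ = T)
    (hTgen : Subgroup.closure T = ⊤) {ε C : ℝ} (hε : 0 < ε) (hC : 1 ≤ C)
    (hCb : ∀ r : ℕ, (growthFn T r : ℝ) ≤ C * Real.exp (ε * r)) (R : ℕ) :
    ∑ h ∈ (ball_finite hTfin hTsym hTgen R).toFinset,
        Real.exp (-(2 * ε) * (wordNorm T h : ℝ))
      ≤ C / (1 - Real.exp (-ε)) := by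
  classical
  set BT := (ball_finite hTfin hTsym hTgen R).toFinset with hBT
  have hmap : ∀ h ∈ BT, wordNorm T h ∈ Finset.range (R + 1) := by
    intro h hh
    rw [Set.Finite.mem_toFinset] at hh
    exact Finset.mem_range.mpr (Nat.lt_succ_of_le hh)
  rw [← Finset.sum_fiberwise_of_maps_to hmap
    (fun h => Real.exp (-(2 * ε) * (wordNorm T h : ℝ)))]
  have hfib : ∀ r ∈ Finset.range (R + 1),
      ∑ h ∈ BT.filter (fun h => wordNorm T h = r),
          Real.exp (-(2 * ε) * (wordNorm T h : ℝ))
        ≤ C * Real.exp (-ε * r) := by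
    intro r _
    have hcongr : ∀ h ∈ BT.filter (fun h => wordNorm T h = r),
        Real.exp (-(2 * ε) * (wordNorm T h : ℝ)) = Real.exp (-(2 * ε) * r) := by
      intro h hh
      rw [(Finset.mem_filter.mp hh).2]
    rw [Finset.sum_congr rfl hcongr, Finset.sum_const, nsmul_eq_mul]
    have hcard : ((BT.filter (fun h => wordNorm T h = r)).card : ℝ) ≤ (growthFn T r : ℝ) := by
      have hsub : BT.filter (fun h => wordNorm T h = r) ⊆
          (ball_finite hTfin hTsym hTgen r).toFinset := by
        intro h hh
        rw [Set.Finite.mem_toFinset]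
        exact le_of_eq (Finset.mem_filter.mp hh).2
      have : growthFn T r = ((ball_finite hTfin hTsym hTgen r).toFinset).card := by
        rw [← Set.ncard_eq_toFinset_card _ (ball_finite hTfin hTsym hTgen r)]
        rfl
      rw [this]
      exact_mod_cast Finset.card_le_card hsub
    calc ((BT.filter (fun h => wordNorm T h = r)).card : ℝ) * Real.exp (-(2 * ε) * r)
        ≤ (C * Real.exp (ε * r)) * Real.exp (-(2 * ε) * r) := by
          refine mul_le_mul_of_nonneg_right (le_trans hcard (hCb r)) ?_
          exact le_of_lt (Real.exp_pos _)
      _ = C * Real.exp (-ε * r) := by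
          rw [mul_assoc, ← Real.exp_add]
          ring_nf
  calc ∑ r ∈ Finset.range (R + 1), ∑ h ∈ BT.filter (fun h => wordNorm T h = r),
          Real.exp (-(2 * ε) * (wordNorm T h : ℝ))
      ≤ ∑ r ∈ Finset.range (R + 1), C * Real.exp (-ε * r) := Finset.sum_le_sum hfib
    _ = C * ∑ r ∈ Finset.range (R + 1), Real.exp (-ε) ^ r := by
        rw [Finset.mul_sum]
        refine Finset.sum_congr rfl fun r _ => ?_
        rw [← Real.exp_nat_mul]
        ring_nf
    _ ≤ C * (1 - Real.exp (-ε))⁻¹ := by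
        refine mul_le_mul_of_nonneg_left ?_ (le_trans zero_le_one hC)
        exact sum_geom_le (le_of_lt (Real.exp_pos _))
          (Real.exp_lt_one_iff.mpr (neg_lt_zero.mpr hε)) _
    _ = C / (1 - Real.exp (-ε)) := (div_eq_mul_inv C _).symm

lemma countF (T : Set H) (hTfin : T.Finite) (hTsym : T⁻¹ = T)
    (hTgen : Subgroup.closure T = ⊤) {ε C : ℝ} (hε : 0 < ε) (hC : 1 ≤ C)
    (hCb : ∀ r : ℕ, (growthFn T r : ℝ) ≤ C * Real.exp (ε * r)) (O : Finset X) (R : ℕ) :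
    (Nat.card {f : X → H // mulSupport f ⊆ ↑O ∧ ∑ x ∈ O, wordNorm T (f x) ≤ R} : ℝ)
      ≤ Real.exp (2 * ε * R) * (C / (1 - Real.exp (-ε))) ^ O.card := by
  classical
  set M := C / (1 - Real.exp (-ε)) with hM
  set BT := (ball_finite hTfin hTsym hTgen R).toFinset with hBT
  set P : Finset (↥O → H) := Fintype.piFinset (fun _ => BT) with hP
  set Pg := P.filter (fun φ => ∑ x : ↥O, wordNorm T (φ x) ≤ R) with hPg
  -- injection into Pg
  have hinj : Nat.card {f : X → H // mulSupport f ⊆ ↑O ∧ ∑ x ∈ O, wordNorm T (f x) ≤ R}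
      ≤ Pg.card := by
    rw [← Nat.card_eq_finsetCard Pg]
    refine Nat.card_le_card_of_injective
      (fun f => (⟨fun x : ↥O => f.1 x, ?_⟩ : {φ // φ ∈ Pg})) ?_
    · rw [hPg, Finset.mem_filter]
      constructor
      · rw [hP, Fintype.mem_piFinset]
        intro x
        rw [hBT, Set.Finite.mem_toFinset]
        exact le_trans (Finset.single_le_sum (f := fun y => wordNorm T (f.1 y))
          (fun i _ => Nat.zero_le _) x.2) f.2.2
      · exact le_trans (le_of_eq (Finset.sum_coe_sort O fun y => wordNorm T (f.1 y))) f.2.2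
    · intro f g hfg
      have hfg' := congrArg Subtype.val hfg
      refine Subtype.ext (funext fun z => ?_)
      by_cases hz : z ∈ O
      · exact congrFun hfg' ⟨z, hz⟩
      · have h1 : f.1 z = 1 := Function.notMem_mulSupport.mp (fun hm => hz (f.2.1 hm))
        have h2 : g.1 z = 1 := Function.notMem_mulSupport.mp (fun hm => hz (g.2.1 hm))
        rw [h1, h2]
  have hM1 : 1 ≤ M := by
    rw [hM]
    have h1q : 0 < 1 - Real.exp (-ε) := sub_pos.mpr
      (Real.exp_lt_one_iff.mpr (neg_lt_zero.mpr hε))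
    rw [le_div_iff₀ h1q]
    have : Real.exp (-ε) > 0 := Real.exp_pos _
    nlinarith
  -- real bound on Pg.card
  have hcardPg : (Pg.card : ℝ) ≤ Real.exp (2 * ε * R) * M ^ O.card := by
    have hterm : ∀ φ ∈ Pg, (1 : ℝ) ≤ Real.exp (2 * ε * R) *
        ∏ x : ↥O, Real.exp (-(2 * ε) * (wordNorm T (φ x) : ℝ)) := by
      intro φ hφ
      have hsum : (∑ x : ↥O, (wordNorm T (φ x) : ℝ)) ≤ R := by
        have := (Finset.mem_filter.mp hφ).2
        exact_mod_cast this
      rw [← Real.exp_sum, ← Real.exp_add]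
      refine Real.one_le_exp ?_
      have : ∑ x : ↥O, -(2 * ε) * (wordNorm T (φ x) : ℝ)
          = -(2 * ε) * ∑ x : ↥O, (wordNorm T (φ x) : ℝ) := by
        rw [Finset.mul_sum]
      rw [this]
      nlinarith
    calc (Pg.card : ℝ) = ∑ _φ ∈ Pg, (1 : ℝ) := by
          rw [Finset.sum_const, nsmul_eq_mul, mul_one]
      _ ≤ ∑ φ ∈ Pg, Real.exp (2 * ε * R) *
            ∏ x : ↥O, Real.exp (-(2 * ε) * (wordNorm T (φ x) : ℝ)) :=
          Finset.sum_le_sum hterm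
      _ = Real.exp (2 * ε * R) * ∑ φ ∈ Pg,
            ∏ x : ↥O, Real.exp (-(2 * ε) * (wordNorm T (φ x) : ℝ)) := by
          rw [Finset.mul_sum]
      _ ≤ Real.exp (2 * ε * R) * ∑ φ ∈ P,
            ∏ x : ↥O, Real.exp (-(2 * ε) * (wordNorm T (φ x) : ℝ)) := by
          refine mul_le_mul_of_nonneg_left ?_ (le_of_lt (Real.exp_pos _))
          refine Finset.sum_le_sum_of_subset_of_nonneg (Finset.filter_subset _ _) ?_
          intro φ _ _
          exact Finset.prod_nonneg fun x _ => le_of_lt (Real.exp_pos _)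
      _ = Real.exp (2 * ε * R) *
            ∏ x : ↥O, ∑ h ∈ BT, Real.exp (-(2 * ε) * (wordNorm T h : ℝ)) := by
          rw [Finset.prod_univ_sum]
      _ ≤ Real.exp (2 * ε * R) * M ^ O.card := by
          refine mul_le_mul_of_nonneg_left ?_ (le_of_lt (Real.exp_pos _))
          calc ∏ x : ↥O, ∑ h ∈ BT, Real.exp (-(2 * ε) * (wordNorm T h : ℝ))
              ≤ ∏ _x : ↥O, M := by
                refine Finset.prod_le_prod ?_ ?_
                · intro x _
                  exact Finset.sum_nonneg fun h _ => le_of_lt (Real.exp_pos _)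
                · intro x _
                  exact inner_sum_le T hTfin hTsym hTgen hε hC hCb R
            _ = M ^ O.card := by
                rw [Finset.prod_const, Finset.card_univ, Fintype.card_coe]
  calc (Nat.card {f : X → H // mulSupport f ⊆ ↑O ∧ ∑ x ∈ O, wordNorm T (f x) ≤ R} : ℝ)
      ≤ (Pg.card : ℝ) := by exact_mod_cast hinj
    _ ≤ Real.exp (2 * ε * R) * M ^ O.card := hcardPg

lemma ncard_le_sum_cover {α ι : Type*} (s : Finset ι) (P : ι → Set α) (A : Set α)
    (hfin : ∀ i ∈ s, (P i).Finite) (hcov : A ⊆ ⋃ i ∈ s, P i) :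
    A.ncard ≤ ∑ i ∈ s, (P i).ncard := by
  classical
  induction s using Finset.induction_on generalizing A with
  | empty =>
    have : A = ∅ := Set.subset_empty_iff.mp (by simpa using hcov)
    simp [this]
  | @insert x s hx ih =>
    rw [Finset.set_biUnion_insert] at hcov
    have hfins : (⋃ i ∈ s, P i).Finite :=
      Set.Finite.biUnion s.finite_toSet (fun i hi => hfin i (Finset.mem_insert_of_mem hi))
    calc A.ncard ≤ (P x ∪ ⋃ i ∈ s, P i).ncard :=
          Set.ncard_le_ncard hcov ((hfin x (Finset.mem_insert_self _ _)).union hfins)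
      _ ≤ (P x).ncard + (⋃ i ∈ s, P i).ncard := Set.ncard_union_le _ _
      _ ≤ (P x).ncard + ∑ i ∈ s, (P i).ncard := by
          exact Nat.add_le_add_left
            (ih _ (fun i hi => hfin i (Finset.mem_insert_of_mem hi)) subset_rfl) _
      _ = ∑ i ∈ insert x s, (P i).ncard := (Finset.sum_insert (f := fun i => (P i).ncard) hx).symm

end Count

end WreathAux
namespace WreathAux

open Filter

section Analytic

lemma one_lt_exp {ε : ℝ} (hε : 0 < ε) : (1 : ℝ) < Real.exp ε := by
  rw [show (1 : ℝ) = Real.exp 0 from Real.exp_zero.symm]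
  exact Real.exp_lt_exp.mpr hε

lemma subexp_criterion {v : ℕ → ℕ} (h1 : ∀ R, 1 ≤ v R)
    (h2 : ∀ ε : ℝ, 0 < ε → ∀ᶠ R : ℕ in atTop, (v R : ℝ) ≤ Real.exp (ε * R)) :
    Tendsto (fun R : ℕ => (v R : ℝ) ^ ((R : ℝ)⁻¹)) atTop (nhds 1) := by
  rw [tendsto_order]
  constructor
  · intro a ha
    filter_upwards [eventually_ge_atTop 1] with R hR
    refine lt_of_lt_of_le ha ?_
    refine Real.one_le_rpow ?_ (by positivity)
    exact_mod_cast h1 R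
  · intro b hb
    have hε : 0 < Real.log b / 2 := by
      have := Real.log_pos hb
      linarith
    filter_upwards [h2 _ hε, eventually_ge_atTop 1] with R hle hR
    have hR0 : (R : ℝ) ≠ 0 := Nat.cast_ne_zero.mpr (by omega)
    have hv0 : (0 : ℝ) ≤ (v R : ℝ) := Nat.cast_nonneg _
    calc (v R : ℝ) ^ ((R : ℝ)⁻¹)
        ≤ (Real.exp (Real.log b / 2 * R)) ^ ((R : ℝ)⁻¹) :=
          Real.rpow_le_rpow hv0 hle (by positivity)
      _ = Real.exp (Real.log b / 2) := by
          rw [Real.exp_mul, ← Real.rpow_mul (le_of_lt (Real.exp_pos _)),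
            mul_inv_cancel₀ hR0, Real.rpow_one]
      _ < b := by
          rw [show b = Real.exp (Real.log b) from (Real.exp_log (by linarith)).symm]
          refine Real.exp_lt_exp.mpr ?_
          have := Real.log_pos hb
          rw [Real.log_exp]
          linarith

lemma eventually_le_exp_of_tendsto {v : ℕ → ℕ}
    (h : Tendsto (fun R : ℕ => (v R : ℝ) ^ ((R : ℝ)⁻¹)) atTop (nhds 1))
    {ε : ℝ} (hε : 0 < ε) : ∀ᶠ R : ℕ in atTop, (v R : ℝ) ≤ Real.exp (ε * R) := by
  filter_upwards [h.eventually_lt_const (one_lt_exp hε), eventually_ge_atTop 1] with R hlt hR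
  have hR0 : (R : ℝ) ≠ 0 := Nat.cast_ne_zero.mpr (by omega)
  have hv0 : (0 : ℝ) ≤ (v R : ℝ) := Nat.cast_nonneg _
  have hstep := Real.rpow_le_rpow (Real.rpow_nonneg hv0 _) (le_of_lt hlt) (Nat.cast_nonneg R)
  rwa [← Real.rpow_mul hv0, inv_mul_cancel₀ hR0, Real.rpow_one,
    ← Real.exp_mul] at hstep

lemma eventually_sublinear {d : ℕ → ℕ}
    (h : Tendsto (fun R : ℕ => (d R : ℝ) / (R : ℝ)) atTop (nhds 0))
    {η : ℝ} (hη : 0 < η) : ∀ᶠ R : ℕ in atTop, (d R : ℝ) ≤ η * R := by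
  filter_upwards [h.eventually_lt_const hη, eventually_ge_atTop 1] with R h1 hR
  have hR0 : (0 : ℝ) < (R : ℝ) := by exact_mod_cast Nat.lt_of_lt_of_le Nat.zero_lt_one hR
  rw [div_lt_iff₀ hR0] at h1
  exact le_of_lt h1

lemma exists_growth_bound {v : ℕ → ℕ}
    (h : Tendsto (fun R : ℕ => (v R : ℝ) ^ ((R : ℝ)⁻¹)) atTop (nhds 1))
    {ε : ℝ} (hε : 0 < ε) :
    ∃ C : ℝ, 1 ≤ C ∧ ∀ r : ℕ, (v r : ℝ) ≤ C * Real.exp (ε * r) := by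
  obtain ⟨r₀, hr₀⟩ := Filter.eventually_atTop.mp (eventually_le_exp_of_tendsto h hε)
  refine ⟨1 + ∑ r ∈ Finset.range r₀, (v r : ℝ), ?_, ?_⟩
  · have : (0 : ℝ) ≤ ∑ r ∈ Finset.range r₀, (v r : ℝ) :=
      Finset.sum_nonneg fun r _ => Nat.cast_nonneg _
    linarith
  · intro r
    have hexp1 : (1 : ℝ) ≤ Real.exp (ε * r) := Real.one_le_exp (by positivity)
    by_cases hr : r₀ ≤ r
    · calc (v r : ℝ) ≤ Real.exp (ε * r) := hr₀ r hr
        _ = 1 * Real.exp (ε * r) := (one_mul _).symm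
        _ ≤ (1 + ∑ r ∈ Finset.range r₀, (v r : ℝ)) * Real.exp (ε * r) := by
            refine mul_le_mul_of_nonneg_right ?_ (le_of_lt (Real.exp_pos _))
            have : (0 : ℝ) ≤ ∑ r ∈ Finset.range r₀, (v r : ℝ) :=
              Finset.sum_nonneg fun r _ => Nat.cast_nonneg _
            linarith
    · have hmem : r ∈ Finset.range r₀ := Finset.mem_range.mpr (by omega)
      have hle : (v r : ℝ) ≤ ∑ r ∈ Finset.range r₀, (v r : ℝ) :=
        Finset.single_le_sum (f := fun i => ((v i : ℝ)))
          (fun i _ => Nat.cast_nonneg _) hmem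
      calc (v r : ℝ) ≤ 1 + ∑ r ∈ Finset.range r₀, (v r : ℝ) := by linarith
        _ = (1 + ∑ r ∈ Finset.range r₀, (v r : ℝ)) * 1 := (mul_one _).symm
        _ ≤ (1 + ∑ r ∈ Finset.range r₀, (v r : ℝ)) * Real.exp (ε * r) := by
            refine mul_le_mul_of_nonneg_left hexp1 ?_
            have : (0 : ℝ) ≤ ∑ r ∈ Finset.range r₀, (v r : ℝ) :=
              Finset.sum_nonneg fun r _ => Nat.cast_nonneg _
            linarith

end Analytic

end WreathAux
namespace WreathAux

open Function MulOpposite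

section Glue

variable {H G X : Type*} [Group H] [Group G] [MulAction Gᵐᵒᵖ X]

lemma sum_norm_le_of_support (T : Set H) {g : X → H} {B : Finset X} {n : ℕ}
    (hsupp : Function.mulSupport g ⊆ ↑B) (hB : ∑ x ∈ B, wordNorm T (g x) ≤ n)
    (A : Finset X) : ∑ x ∈ A, wordNorm T (g x) ≤ n := by
  classical
  have key : ∀ x, wordNorm T (g x) ≠ 0 → x ∈ B := by
    intro x hx
    have hgx : g x ≠ 1 := by
      intro h1
      rw [h1, wordNorm_one] at hx
      exact hx rfl
    exact hsupp hgx
  calc ∑ x ∈ A, wordNorm T (g x)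
      = ∑ x ∈ A.filter (fun x => wordNorm T (g x) ≠ 0), wordNorm T (g x) :=
        (Finset.sum_filter_ne_zero A).symm
    _ ≤ ∑ x ∈ B, wordNorm T (g x) := by
        refine Finset.sum_le_sum_of_subset ?_
        intro x hx
        exact key x (Finset.mem_filter.mp hx).2
    _ ≤ n := hB

lemma card_P_le (S : Set G) (T : Set H)
    (hSfin : S.Finite) (hSsym : S⁻¹ = S) (hSgen : Subgroup.closure S = ⊤)
    (hTfin : T.Finite) (hTsym : T⁻¹ = T) (hTgen : Subgroup.closure T = ⊤)
    (R : ℕ) (O : Set X) (hOfin : O.Finite) {ε C : ℝ} (hε : 0 < ε) (hC : 1 ≤ C)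
    (hCb : ∀ r : ℕ, (growthFn T r : ℝ) ≤ C * Real.exp (ε * r)) :
    ({w : ↥(PermWreath.restricted H G X) |
        wordNorm S (w : PermWreath H G X).pt ≤ R ∧
        Function.mulSupport (w : PermWreath H G X).fn ⊆ O ∧
        ∀ A : Finset X, ∑ x ∈ A, wordNorm T ((w : PermWreath H G X).fn x) ≤ R}).Finite
    ∧ (({w : ↥(PermWreath.restricted H G X) |
        wordNorm S (w : PermWreath H G X).pt ≤ R ∧
        Function.mulSupport (w : PermWreath H G X).fn ⊆ O ∧
        ∀ A : Finset X, ∑ x ∈ A, wordNorm T ((w : PermWreath H G X).fn x) ≤ R}).ncard : ℝ)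
      ≤ (growthFn S R : ℝ) *
        (Real.exp (2 * ε * R) * (C / (1 - Real.exp (-ε))) ^ hOfin.toFinset.card) := by
  classical
  set P : Set ↥(PermWreath.restricted H G X) :=
    {w : ↥(PermWreath.restricted H G X) |
        wordNorm S (w : PermWreath H G X).pt ≤ R ∧
        Function.mulSupport (w : PermWreath H G X).fn ⊆ O ∧
        ∀ A : Finset X, ∑ x ∈ A, wordNorm T ((w : PermWreath H G X).fn x) ≤ R} with hP
  haveI hFfin : Finite {f : X → H // mulSupport f ⊆ ↑hOfin.toFinset ∧
      ∑ x ∈ hOfin.toFinset, wordNorm T (f x) ≤ R} :=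
    F_finite T hTfin hTsym hTgen _ R
  haveI hBfin : Finite {g : G // wordNorm S g ≤ R} :=
    (ball_finite hSfin hSsym hSgen R).to_subtype
  have hΦinj : ∃ Φ : ↥P → ({g : G // wordNorm S g ≤ R} ×
      {f : X → H // mulSupport f ⊆ ↑hOfin.toFinset ∧
        ∑ x ∈ hOfin.toFinset, wordNorm T (f x) ≤ R}), Function.Injective Φ := by
    refine ⟨fun w => (⟨((w : ↥(PermWreath.restricted H G X)) : PermWreath H G X).pt, w.2.1⟩,
      ⟨((w : ↥(PermWreath.restricted H G X)) : PermWreath H G X).fn,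
        by rw [Set.Finite.coe_toFinset]; exact w.2.2.1, w.2.2.2 _⟩), ?_⟩
    intro a b hab
    have h1 : (((a : ↥(PermWreath.restricted H G X)) : PermWreath H G X)).pt
        = (((b : ↥(PermWreath.restricted H G X)) : PermWreath H G X)).pt :=
      congrArg Subtype.val (congrArg Prod.fst hab)
    have h2 : (((a : ↥(PermWreath.restricted H G X)) : PermWreath H G X)).fn
        = (((b : ↥(PermWreath.restricted H G X)) : PermWreath H G X)).fn :=
      congrArg Subtype.val (congrArg Prod.snd hab)
    exact Subtype.ext (Subtype.ext (PermWreath.ext h2 h1))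
  obtain ⟨Φ, hΦ⟩ := hΦinj
  have hPfin : P.Finite := Set.finite_coe_iff.mp (Finite.of_injective Φ hΦ)
  refine ⟨hPfin, ?_⟩
  have hcard : P.ncard ≤ growthFn S R *
      Nat.card {f : X → H // mulSupport f ⊆ ↑hOfin.toFinset ∧
        ∑ x ∈ hOfin.toFinset, wordNorm T (f x) ≤ R} := by
    calc P.ncard ≤ Nat.card ({g : G // wordNorm S g ≤ R} ×
        {f : X → H // mulSupport f ⊆ ↑hOfin.toFinset ∧
          ∑ x ∈ hOfin.toFinset, wordNorm T (f x) ≤ R}) :=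
        Nat.card_le_card_of_injective Φ hΦ
      _ = _ := Nat.card_prod _ _
  calc (P.ncard : ℝ)
      ≤ (growthFn S R : ℝ) * (Nat.card {f : X → H // mulSupport f ⊆ ↑hOfin.toFinset ∧
          ∑ x ∈ hOfin.toFinset, wordNorm T (f x) ≤ R} : ℝ) := by exact_mod_cast hcard
    _ ≤ (growthFn S R : ℝ) *
        (Real.exp (2 * ε * R) * (C / (1 - Real.exp (-ε))) ^ hOfin.toFinset.card) := by
        refine mul_le_mul_of_nonneg_left ?_ (Nat.cast_nonneg _)
        exact countF T hTfin hTsym hTgen hε hC hCb _ R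

lemma one_le_M {ε C : ℝ} (hε : 0 < ε) (hC : 1 ≤ C) : 1 ≤ C / (1 - Real.exp (-ε)) := by
  have h1q : 0 < 1 - Real.exp (-ε) := sub_pos.mpr
    (Real.exp_lt_one_iff.mpr (neg_lt_zero.mpr hε))
  rw [le_div_iff₀ h1q]
  have h2 : Real.exp (-ε) > 0 := Real.exp_pos _
  nlinarith

end Glue

end WreathAux
open WreathAux
/-- **Subexponential growth of permutational wreath products**: let `G` (with finite
symmetric generating set `S`, of subexponential growth) act transitively on the right on
a set `X` with basepoint `ξ`, and let `H` (with finite symmetric generating set `T`)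
have subexponential growth.  If the inverted orbit growth `Δ` is sublinear and the
inverted orbit choice growth `Σ` is subexponential, then the (restricted) permutational
wreath product `W = H ≀_X G`, with generating set `U = S ∪ {t@ξ : t ∈ T}`, has
subexponential growth. -/
theorem permWreath_subexponential_growth {H G X : Type*} [Group H] [Group G]
    [MulAction Gᵐᵒᵖ X]
    (S : Set G) (T : Set H) (ξ : X)
    (hSfin : S.Finite) (hSsym : S⁻¹ = S) (hSgen : Subgroup.closure S = ⊤)
    (hTfin : T.Finite) (hTsym : T⁻¹ = T) (hTgen : Subgroup.closure T = ⊤)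
    (htrans : ∀ x y : X, ∃ g : G, MulOpposite.op g • x = y)
    (hGsub : Filter.Tendsto (fun R : ℕ => (growthFn S R : ℝ) ^ ((R : ℝ)⁻¹))
      Filter.atTop (nhds 1))
    (hHsub : Filter.Tendsto (fun R : ℕ => (growthFn T R : ℝ) ^ ((R : ℝ)⁻¹))
      Filter.atTop (nhds 1))
    (hΔ : Filter.Tendsto (fun R : ℕ => (invOrbitGrowth S ξ R : ℝ) / (R : ℝ))
      Filter.atTop (nhds 0))
    (hSg : Filter.Tendsto (fun R : ℕ => (invOrbitChoices S ξ R : ℝ) ^ ((R : ℝ)⁻¹))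
      Filter.atTop (nhds 1)) :
    let U : Set ↥(PermWreath.restricted H G X) :=
      {w | (w : PermWreath H G X) ∈
        ((fun s : G => PermWreath.mk (1 : X → H) s) '' S) ∪
        ((fun t : H => PermWreath.mk (atPoint ξ t) (1 : G)) '' T)}
    Filter.Tendsto (fun R : ℕ => (growthFn U R : ℝ) ^ ((R : ℝ)⁻¹))
      Filter.atTop (nhds 1) := by
  intro U
  classical
  have hUsym : U⁻¹ = U := Uset_symm ξ hSsym hTsym
  have hUgen : Subgroup.closure U = ⊤ := closure_Uset S T ξ hSgen hTgen htrans
  have hUfin : U.Finite := Uset_finite ξ hSfin hTfin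
  refine subexp_criterion (fun R => one_le_growthFn hUfin hUsym hUgen R) ?_
  intro ε' hε'
  set ε := ε' / 6 with hεdef
  have hε : 0 < ε := by positivity
  obtain ⟨C, hC1, hCb⟩ := exists_growth_bound hHsub hε
  set M := C / (1 - Real.exp (-ε)) with hMdef
  have hM1 : (1 : ℝ) ≤ M := one_le_M hε hC1
  have hM0 : (0 : ℝ) < M := lt_of_lt_of_le one_pos hM1
  set L := max (Real.log M) 1 with hLdef
  have hL0 : (0 : ℝ) < L := lt_of_lt_of_le one_pos (le_max_right _ _)
  have hη : 0 < ε / L := by positivity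
  have hhalf : (1 : ℝ) / 2 < 1 := by norm_num
  filter_upwards [eventually_le_exp_of_tendsto hGsub hε,
    eventually_le_exp_of_tendsto hSg hε,
    hSg.eventually_const_lt hhalf,
    eventually_sublinear hΔ hη,
    Filter.eventually_ge_atTop 1] with R hGb hSb hSpos hDb hR1
  -- the set of possible inverted orbits is finite
  have hSne : invOrbitChoices S ξ R ≠ 0 := by
    intro h0
    rw [h0] at hSpos
    have hz : ((0 : ℕ) : ℝ) ^ ((R : ℝ))⁻¹ = 0 := by
      rw [Nat.cast_zero]
      exact Real.zero_rpow (inv_ne_zero (Nat.cast_ne_zero.mpr (by omega)))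
    rw [hz] at hSpos
    norm_num at hSpos
  have hOrbfin : {O : Set X | ∃ w : List G, (∀ s ∈ w, s ∈ S) ∧ w.length ≤ R ∧
      O = invertedOrbit ξ w}.Finite := by
    rw [← Set.finite_coe_iff]
    exact (Nat.card_ne_zero.mp hSne).2
  set 𝒪 : Finset (Set X) := hOrbfin.toFinset with h𝒪
  set P : Set X → Set ↥(PermWreath.restricted H G X) := fun O =>
    {w | wordNorm S (w : PermWreath H G X).pt ≤ R ∧
         Function.mulSupport (w : PermWreath H G X).fn ⊆ O ∧
         ∀ A : Finset X, ∑ x ∈ A, wordNorm T ((w : PermWreath H G X).fn x) ≤ R}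
    with hPdef
  -- covering of the ball by the pieces P O
  have hcov : {w : ↥(PermWreath.restricted H G X) | wordNorm U w ≤ R} ⊆ ⋃ O ∈ 𝒪, P O := by
    intro w hw
    obtain ⟨lU, hlU, hlen, hprod⟩ := exists_word_of_gen hUsym hUgen w
    have hlenR : lU.length ≤ R := by rw [hlen]; exact hw
    set lv : List (PermWreath H G X) := lU.map Subtype.val with hlv
    have hlvlen : lv.length = lU.length := List.length_map _
    have hlvprod : lv.prod = (w : PermWreath H G X) := by
      rw [hlv, ← hprod]
      exact (map_list_prod (PermWreath.restricted H G X).subtype lU).symm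
    have hent : ∀ a ∈ lv, (∃ s ∈ S, a = ⟨1, s⟩) ∨ (∃ t ∈ T, a = ⟨atPoint ξ t, 1⟩) := by
      intro a ha
      rw [hlv] at ha
      obtain ⟨b, hb, rfl⟩ := List.mem_map.mp ha
      rcases hlU b hb with ⟨s, hs, heq⟩ | ⟨t, ht, heq⟩
      · exact Or.inl ⟨s, hs, heq.symm⟩
      · exact Or.inr ⟨t, ht, heq.symm⟩
    obtain ⟨ls, B, h1, h2, h3, h4, h5, h6⟩ := core_decomp S T ξ hTsym hTgen lv hent
    rw [hlvprod] at h3 h4 h5 h6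
    set ws : List G := ((lv.map (fun a => a.pt⁻¹)).reverse).filter (fun s => s ≠ 1) with hws
    have hwsS : ∀ s ∈ ws, s ∈ S := by
      intro e he
      rw [hws] at he
      have hene : e ≠ 1 := by simpa using (List.mem_filter.mp he).2
      have hem : e ∈ (lv.map (fun a => a.pt⁻¹)).reverse := (List.mem_filter.mp he).1
      rw [List.mem_reverse] at hem
      obtain ⟨a, ha, rfl⟩ := List.mem_map.mp hem
      rcases hent a ha with ⟨s, hs, rfl⟩ | ⟨t, ht, rfl⟩
      · show s⁻¹ ∈ S
        rw [← hSsym]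
        exact Set.inv_mem_inv.mpr hs
      · exact absurd inv_one hene
    have hwslen : ws.length ≤ R := by
      calc ws.length ≤ ((lv.map (fun a => a.pt⁻¹)).reverse).length :=
            List.length_filter_le _ _
        _ = lv.length := by rw [List.length_reverse, List.length_map]
        _ ≤ R := by rw [hlvlen]; exact hlenR
    have hOmem : invertedOrbit ξ ws ∈ 𝒪 := by
      rw [h𝒪, Set.Finite.mem_toFinset]
      exact ⟨ws, hwsS, hwslen, rfl⟩
    refine Set.mem_biUnion hOmem ?_
    refine ⟨?_, ?_, ?_⟩
    · refine wordNorm_le_of_word h1 ?_ h3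
      calc ls.length ≤ lv.length := h2
        _ ≤ R := by rw [hlvlen]; exact hlenR
    · rw [hws, invertedOrbit_filter]
      exact h4
    · intro A
      refine sum_norm_le_of_support T h5 (le_trans h6 ?_) A
      rw [hlvlen]
      exact hlenR
  -- bound on each piece
  have hQ : ∀ O ∈ 𝒪, (P O).Finite ∧ ((P O).ncard : ℝ) ≤
      (growthFn S R : ℝ) * (Real.exp (2 * ε * R) * Real.exp (ε * R)) := by
    intro O hO
    rw [h𝒪, Set.Finite.mem_toFinset] at hO
    obtain ⟨wsO, hwsO, hwsOlen, rfl⟩ := hO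
    have hOf : (invertedOrbit ξ wsO).Finite := invertedOrbit_finite ξ wsO
    obtain ⟨hfin, hble⟩ := card_P_le S T hSfin hSsym hSgen hTfin hTsym hTgen R
      (invertedOrbit ξ wsO) hOf hε hC1 hCb
    refine ⟨hfin, le_trans hble ?_⟩
    refine mul_le_mul_of_nonneg_left ?_ (Nat.cast_nonneg _)
    refine mul_le_mul_of_nonneg_left ?_ (le_of_lt (Real.exp_pos _))
    have hcardO : hOf.toFinset.card ≤ invOrbitGrowth S ξ R := by
      have hmemset : hOf.toFinset.card ∈ {n | ∃ w : List G, (∀ s ∈ w, s ∈ S) ∧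
          w.length ≤ R ∧ n = Nat.card ↥(invertedOrbit ξ w)} := by
        refine ⟨wsO, hwsO, hwsOlen, ?_⟩
        rw [← Set.ncard_eq_toFinset_card _ hOf]
        rfl
      refine le_csSup ⟨R + 1, ?_⟩ hmemset
      rintro n ⟨w', hw', hw'len, rfl⟩
      calc Nat.card ↥(invertedOrbit ξ w') = (invertedOrbit ξ w').ncard := rfl
        _ ≤ w'.length + 1 := ncard_invertedOrbit_le ξ w'
        _ ≤ R + 1 := by omega
    calc M ^ hOf.toFinset.card = Real.exp (Real.log M) ^ hOf.toFinset.card := by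
          rw [Real.exp_log hM0]
      _ = Real.exp ((hOf.toFinset.card : ℝ) * Real.log M) := by
          rw [Real.exp_nat_mul]
      _ ≤ Real.exp (ε * R) := by
          refine Real.exp_le_exp.mpr ?_
          have hdle : ((hOf.toFinset.card : ℕ) : ℝ) ≤ (ε / L) * R := by
            refine le_trans ?_ hDb
            exact_mod_cast hcardO
          have hlogM : Real.log M ≤ L := le_max_left _ _
          have hlog0 : 0 ≤ Real.log M := Real.log_nonneg hM1
          calc ((hOf.toFinset.card : ℕ) : ℝ) * Real.log M ≤ ((ε / L) * R) * L := by
                refine mul_le_mul hdle hlogM hlog0 ?_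
                positivity
            _ = ε * R := by field_simp
  -- assemble
  have hsum : ({w : ↥(PermWreath.restricted H G X) | wordNorm U w ≤ R}).ncard
      ≤ ∑ O ∈ 𝒪, (P O).ncard :=
    ncard_le_sum_cover 𝒪 P _ (fun O hO => (hQ O hO).1) hcov
  have hgrU : growthFn U R
      = ({w : ↥(PermWreath.restricted H G X) | wordNorm U w ≤ R}).ncard := rfl
  have h𝒪card : 𝒪.card = invOrbitChoices S ξ R := by
    rw [h𝒪, ← Set.ncard_eq_toFinset_card _ hOrbfin]
    rfl
  have hR0 : (0 : ℝ) ≤ (R : ℝ) := Nat.cast_nonneg _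
  calc (growthFn U R : ℝ)
      ≤ ((∑ O ∈ 𝒪, (P O).ncard : ℕ) : ℝ) := by
        rw [hgrU]
        exact_mod_cast hsum
    _ = ∑ O ∈ 𝒪, ((P O).ncard : ℝ) := by push_cast; rfl
    _ ≤ ∑ _O ∈ 𝒪, (growthFn S R : ℝ) * (Real.exp (2 * ε * R) * Real.exp (ε * R)) :=
        Finset.sum_le_sum (fun O hO => (hQ O hO).2)
    _ = (𝒪.card : ℝ) * ((growthFn S R : ℝ) * (Real.exp (2 * ε * R) * Real.exp (ε * R))) := by
        rw [Finset.sum_const, nsmul_eq_mul]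
    _ ≤ Real.exp (ε * R) * (Real.exp (ε * R) * (Real.exp (2 * ε * R) * Real.exp (ε * R))) := by
        refine mul_le_mul ?_ ?_ ?_ (le_of_lt (Real.exp_pos _))
        · rw [h𝒪card]
          exact hSb
        · refine mul_le_mul_of_nonneg_right hGb ?_
          positivity
        · positivity
    _ = Real.exp (5 * ε * R) := by
        rw [← Real.exp_add, ← Real.exp_add, ← Real.exp_add]
        congr 1
        ring
    _ ≤ Real.exp (ε' * R) := by
        refine Real.exp_le_exp.mpr ?_
        rw [hεdef]
        nlinarith
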